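/- The measure μ(x) = ∏ᵢ (k⁺(i)/k⁻(i))^{cᵢ(x)} on the polymer state space satisfies the global balance equations of the copolymerization CTMC: for every x ∈ 𝒯, q(x)·μ(x) = Σ_{y ≠ x} μ(y)·q(y,x), where q(x) = Σ_{y ≠ x} q(x,y) is the total exit rate (the sums are finite since each state has at most d+1 neighbors with positive rate). -/
import Mathlib


/-- The measure `μ(x) = ∏ i, (k⁺ i / k⁻ i) ^ (count of i in x)` on the
polymer state space `List (Fin d)` satisfies the global balance equations of the
copolymerization CTMC: for every state `x`,
`q(x) · μ(x) = Σ_{y ≠ x} μ(y) · q(y,x)`, where `q(x) = Σ_{y ≠ x} q(x,y)` is the total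
exit rate.  The transition rates are `q(x, x·i) = k⁺ i`, `q(x·i, x) = k⁻ i`, and `0`
for every other pair. -/
theorem stmt0 (d : ℕ) (hd : 1 ≤ d) (kp km : Fin d → ℝ)
    (hkp : ∀ i, 0 < kp i) (hkm : ∀ i, 0 < km i)
    (q : List (Fin d) → List (Fin d) → ℝ)
    (hq_attach : ∀ (x : List (Fin d)) (i : Fin d), q x (x ++ [i]) = kp i)
    (hq_detach : ∀ (x : List (Fin d)) (i : Fin d), q (x ++ [i]) x = km i)
    (hq_zero : ∀ x y : List (Fin d),
      (¬ ∃ i : Fin d, y = x ++ [i]) → (¬ ∃ i : Fin d, x = y ++ [i]) → q x y = 0)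
    (μ : List (Fin d) → ℝ)
    (hμ : ∀ x : List (Fin d), μ x = ∏ i : Fin d, (kp i / km i) ^ (x.count i)) :
    ∀ x : List (Fin d),
      (∑' y : List (Fin d), if y = x then 0 else q x y) * μ x
        = ∑' y : List (Fin d), if y = x then 0 else μ y * q y x := by
  have hconcat : ∀ (a c : List (Fin d)) (b e : Fin d), a ++ [b] = c ++ [e] → a = c ∧ b = e := by
    intro a c b e h
    simpa using List.append_inj' h rfl
  have hinj : ∀ x : List (Fin d), Function.Injective (fun j : Fin d => x ++ [j]) := by
    intro x j₁ j₂ h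
    exact (hconcat x x j₁ j₂ h).2
  have hne : ∀ (x : List (Fin d)) (j : Fin d), x ++ [j] ≠ x := by
    intro x j h
    simpa using congrArg List.length h
  have hμ_app : ∀ (x : List (Fin d)) (j : Fin d), μ (x ++ [j]) = μ x * (kp j / km j) := by
    intro x j
    rw [hμ, hμ]
    have hc : ∀ i : Fin d, List.count i (x ++ [j]) = List.count i x + if i = j then 1 else 0 := by
      intro i; simp [List.count_append, List.count_singleton', eq_comm]
    simp_rw [hc, pow_add, pow_ite, pow_one, pow_zero, Finset.prod_mul_distrib,
      Finset.prod_ite_eq', Finset.mem_univ, if_true]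
  intro x
  rcases List.eq_nil_or_concat x with rfl | ⟨x', i, rfl⟩
  any_goals simp only [List.concat_eq_append]
  · -- x = []
    set s : Finset (List (Fin d)) := Finset.univ.image (fun j : Fin d => [j]) with hs
    have hmem : ∀ y : List (Fin d), y ∈ s ↔ ∃ j : Fin d, y = [j] := by
      intro y; simp [hs, eq_comm]
    have h1 : (∑' y : List (Fin d), if y = [] then 0 else q [] y)
        = ∑ y ∈ s, (if y = [] then 0 else q [] y) := by
      apply tsum_eq_sum
      intro y hy
      rcases eq_or_ne y [] with rfl | hy0
      · simp
      · rw [if_neg hy0]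
        apply hq_zero
        · rintro ⟨j, rfl⟩; exact hy ((hmem _).2 ⟨j, by simp⟩)
        · rintro ⟨j, h⟩; simpa using congrArg List.length h
    have h2 : (∑' y : List (Fin d), if y = [] then 0 else μ y * q y [])
        = ∑ y ∈ s, (if y = [] then 0 else μ y * q y []) := by
      apply tsum_eq_sum
      intro y hy
      rcases eq_or_ne y [] with rfl | hy0
      · simp
      · rw [if_neg hy0]
        have : q y [] = 0 := by
          apply hq_zero
          · rintro ⟨j, h⟩; simpa using congrArg List.length h
          · rintro ⟨j, rfl⟩; exact hy ((hmem _).2 ⟨j, by simp⟩)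
        rw [this, mul_zero]
    rw [h1, h2, hs, Finset.sum_image (fun a _ b _ h => by simpa using h),
      Finset.sum_image (fun a _ b _ h => by simpa using h)]
    have e1 : ∀ j : Fin d, (if [j] = ([] : List (Fin d)) then 0 else q [] [j]) = kp j := by
      intro j
      rw [if_neg (by simp)]
      simpa using hq_attach [] j
    have e2 : ∀ j : Fin d, (if [j] = ([] : List (Fin d)) then 0 else μ [j] * q [j] []) = μ [] * kp j := by
      intro j
      rw [if_neg (by simp)]
      have hqd := hq_detach [] j
      simp only [List.nil_append] at hqd
      rw [hqd, show ([j] : List (Fin d)) = [] ++ [j] by simp, hμ_app, mul_assoc,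
        div_mul_cancel₀ _ (hkm j).ne']
    simp_rw [e1, e2]
    rw [Finset.sum_mul]
    exact Finset.sum_congr rfl fun j _ => mul_comm _ _
  · -- x = x' ++ [i]
    set x := x' ++ [i] with hx
    have hx'ne : x' ≠ x := by
      intro h; rw [hx] at h; simpa using congrArg List.length h
    set t : Finset (List (Fin d)) := Finset.univ.image (fun j : Fin d => x ++ [j]) with ht
    have hx'nt : x' ∉ t := by
      simp only [ht, Finset.mem_image]
      rintro ⟨j, -, h⟩
      have := congrArg List.length h
      simp [hx] at this
    set s : Finset (List (Fin d)) := insert x' t with hs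
    have hsupp : ∀ y : List (Fin d), y ∉ s → y ≠ x → q y x = 0 ∧ q x y = 0 := by
      intro y hy hyx
      have hy1 : ¬ ∃ j : Fin d, y = x ++ [j] := by
        rintro ⟨j, rfl⟩
        exact hy (Finset.mem_insert_of_mem (Finset.mem_image_of_mem _ (Finset.mem_univ j)))
      have hy2 : ¬ ∃ j : Fin d, x = y ++ [j] := by
        rintro ⟨j, h⟩
        rw [hx] at h
        obtain ⟨rfl, rfl⟩ := hconcat x' y i j h
        exact hy (by simp [hs])
      exact ⟨hq_zero y x hy2 hy1, hq_zero x y hy1 hy2⟩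
    have h1 : (∑' y : List (Fin d), if y = x then 0 else q x y)
        = ∑ y ∈ s, (if y = x then 0 else q x y) := by
      apply tsum_eq_sum
      intro y hy
      rcases eq_or_ne y x with rfl | hyx
      · simp
      · rw [if_neg hyx, (hsupp y hy hyx).2]
    have h2 : (∑' y : List (Fin d), if y = x then 0 else μ y * q y x)
        = ∑ y ∈ s, (if y = x then 0 else μ y * q y x) := by
      apply tsum_eq_sum
      intro y hy
      rcases eq_or_ne y x with rfl | hyx
      · simp
      · rw [if_neg hyx, (hsupp y hy hyx).1, mul_zero]
    rw [h1, h2, hs, Finset.sum_insert hx'nt, Finset.sum_insert hx'nt, ht,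
      Finset.sum_image (fun a _ b _ h => hinj x h),
      Finset.sum_image (fun a _ b _ h => hinj x h)]
    have e1 : ∀ j : Fin d, (if x ++ [j] = x then 0 else q x (x ++ [j])) = kp j := by
      intro j; rw [if_neg (hne x j), hq_attach]
    have e2 : ∀ j : Fin d, (if x ++ [j] = x then 0 else μ (x ++ [j]) * q (x ++ [j]) x)
        = μ x * kp j := by
      intro j
      rw [if_neg (hne x j), hq_detach, hμ_app, mul_assoc, div_mul_cancel₀ _ (hkm j).ne']
    have e3 : (if x' = x then 0 else q x x') = km i := by
      rw [if_neg hx'ne, hx, hq_detach]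
    have e4 : (if x' = x then 0 else μ x' * q x' x) = μ x * km i := by
      rw [if_neg hx'ne, hx, hq_attach, hμ_app, mul_assoc, div_mul_cancel₀ _ (hkm i).ne']
    simp_rw [e1, e2, e3, e4, ← Finset.mul_sum]
    ring
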